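/- Every element g ∈ G = A ∗_C B is conjugate in G to a cyclically reduced element g₀. The element g₀ is not uniquely determined by g, but its length is: any two cyclically reduced elements of G that are conjugate to g have reduced forms of the same length. -/

import Mathlib

open Monoid

universe u

/-- The two factors of the amalgam, indexed by `Bool`. -/
def Fac (A B : Type u) : Bool → Type u
  | true => A
  | false => B

instance FacGroup (A B : Type u) [Group A] [Group B] : (b : Bool) → Group (Fac A B b)
  | true => inferInstanceAs (Group A)
  | false => inferInstanceAs (Group B)

variable {A B C : Type u} [Group A] [Group B] [Group C]

/-- The family of monomorphisms `C → A`, `C → B`. -/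
def amalgHom (φ : C →* A) (ψ : C →* B) : (b : Bool) → C →* Fac A B b
  | true => φ
  | false => ψ

variable (φ : C →* A) (ψ : C →* B)

/-- The amalgamated free product `G = A ∗_C B`, i.e. the pushout of `φ` and `ψ`. -/
abbrev Amalg : Type u := Monoid.PushoutI (amalgHom φ ψ)

/-- The factor `A`, identified with its image in `G = A ∗_C B`. -/
def facA : Subgroup (Amalg φ ψ) := (Monoid.PushoutI.of (φ := amalgHom φ ψ) true).range

/-- The factor `B`, identified with its image in `G = A ∗_C B`. -/
def facB : Subgroup (Amalg φ ψ) := (Monoid.PushoutI.of (φ := amalgHom φ ψ) false).range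

/-- The amalgamated subgroup `C`, identified with its image in `G = A ∗_C B`. -/
def amalgC : Subgroup (Amalg φ ψ) := (Monoid.PushoutI.base (amalgHom φ ψ)).range

/-- `c * g₁ ⋯ gₙ` (with the list `L = [g₁, …, gₙ]`) is a reduced form:
`c ∈ C`, each `gᵢ ∈ (A ∪ B) ∖ C`, and consecutive letters lie in different factors. -/
def ReducedForm (c : Amalg φ ψ) (L : List (Amalg φ ψ)) : Prop :=
  c ∈ amalgC φ ψ ∧
  (∀ x ∈ L, (x ∈ facA φ ψ ∨ x ∈ facB φ ψ) ∧ x ∉ amalgC φ ψ) ∧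
  L.Chain' (fun x y => (x ∈ facA φ ψ → y ∈ facB φ ψ) ∧ (x ∈ facB φ ψ → y ∈ facA φ ψ))

/-- A reduced form `c * g₁ ⋯ gₙ` is cyclically reduced if `n = 0`, or `n = 1` and the
element is not conjugate to an element of `C`, or `n ≥ 2` and `g₁`, `gₙ` lie in different
factors. -/
def CyclicallyReducedForm (c : Amalg φ ψ) (L : List (Amalg φ ψ)) : Prop :=
  ReducedForm φ ψ c L ∧
  (L.length = 0 ∨
    (L.length = 1 ∧ ∀ x : Amalg φ ψ, x⁻¹ * (c * L.prod) * x ∉ amalgC φ ψ) ∨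
    (2 ≤ L.length ∧ ∀ x y : Amalg φ ψ, x ∈ L.head? → y ∈ L.getLast? →
      ((x ∈ facA φ ψ → y ∈ facB φ ψ) ∧ (x ∈ facB φ ψ → y ∈ facA φ ψ))))

/-- An element of `G = A ∗_C B` is cyclically reduced if it has a cyclically reduced
reduced form. -/
def CyclicallyReduced (g : Amalg φ ψ) : Prop :=
  ∃ (c : Amalg φ ψ) (L : List (Amalg φ ψ)), g = c * L.prod ∧ CyclicallyReducedForm φ ψ c L
namespace AmalgCR

open Monoid Monoid.PushoutI List Subgroup

variable {A B C : Type u} [Group A] [Group B] [Group C] {φ : C →* A} {ψ : C →* B}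

/-- The letter `x` lies in factor `b` and not in the amalgamated subgroup. -/
def Rel (φ : C →* A) (ψ : C →* B) (x : Amalg φ ψ) (b : Bool) : Prop :=
  x ∈ (Monoid.PushoutI.of (φ := amalgHom φ ψ) b).range ∧ x ∉ amalgC φ ψ

/-- Annotated reduced form. -/
def RF (φ : C →* A) (ψ : C →* B) (c : Amalg φ ψ) (L : List (Amalg φ ψ))
    (bs : List Bool) : Prop :=
  c ∈ amalgC φ ψ ∧ List.Forall₂ (Rel φ ψ) L bs ∧ bs.Chain' (· ≠ ·)

theorem injPhi (hφ : Function.Injective φ) (hψ : Function.Injective ψ) :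
    ∀ b, Function.Injective (amalgHom φ ψ b) := by
  rintro (_ | _)
  · exact hψ
  · exact hφ

theorem mem_fac_of_mem_C {x : Amalg φ ψ} (h : x ∈ amalgC φ ψ) (b : Bool) :
    x ∈ (Monoid.PushoutI.of (φ := amalgHom φ ψ) b).range := by
  rcases h with ⟨h, rfl⟩
  exact ⟨amalgHom φ ψ b h, Monoid.PushoutI.of_apply_eq_base (amalgHom φ ψ) b h⟩

theorem mem_C_of_both (hφ : Function.Injective φ) (hψ : Function.Injective ψ) {x : Amalg φ ψ} {b b' : Bool} (hbb : b ≠ b')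
    (h1 : x ∈ (Monoid.PushoutI.of (φ := amalgHom φ ψ) b).range)
    (h2 : x ∈ (Monoid.PushoutI.of (φ := amalgHom φ ψ) b').range) :
    x ∈ amalgC φ ψ := by
  have h := Monoid.PushoutI.inf_of_range_eq_base_range (injPhi hφ hψ) hbb
  show x ∈ (Monoid.PushoutI.base (amalgHom φ ψ)).range
  rw [← h]
  exact Subgroup.mem_inf.2 ⟨h1, h2⟩

theorem rel_eq (hφ : Function.Injective φ) (hψ : Function.Injective ψ) {x : Amalg φ ψ} {b b' : Bool} (hx : Rel φ ψ x b)
    (h2 : x ∈ (Monoid.PushoutI.of (φ := amalgHom φ ψ) b').range) : b = b' := by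
  by_contra hbb
  exact hx.2 (mem_C_of_both hφ hψ hbb hx.1 h2)

theorem rel_facA (hφ : Function.Injective φ) (hψ : Function.Injective ψ) {x : Amalg φ ψ} {b : Bool} (hx : Rel φ ψ x b) :
    x ∈ facA φ ψ ↔ b = true :=
  ⟨fun h => rel_eq hφ hψ hx h, fun h => by subst h; exact hx.1⟩

theorem rel_facB (hφ : Function.Injective φ) (hψ : Function.Injective ψ) {x : Amalg φ ψ} {b : Bool} (hx : Rel φ ψ x b) :
    x ∈ facB φ ψ ↔ b = false :=
  ⟨fun h => rel_eq hφ hψ hx h, fun h => by subst h; exact hx.1⟩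

/- ### Letter algebra -/

theorem Rel.inv {x : Amalg φ ψ} {b : Bool} (hx : Rel φ ψ x b) : Rel φ ψ x⁻¹ b :=
  ⟨inv_mem hx.1, fun h => hx.2 (by simpa using inv_mem h)⟩

theorem Rel.mul_C {x c : Amalg φ ψ} {b : Bool} (hx : Rel φ ψ x b)
    (hc : c ∈ amalgC φ ψ) : Rel φ ψ (x * c) b :=
  ⟨mul_mem hx.1 (mem_fac_of_mem_C hc b),
    fun h => hx.2 (by simpa using mul_mem h (inv_mem hc))⟩

theorem Rel.C_mul {x c : Amalg φ ψ} {b : Bool} (hx : Rel φ ψ x b)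
    (hc : c ∈ amalgC φ ψ) : Rel φ ψ (c * x) b :=
  ⟨mul_mem (mem_fac_of_mem_C hc b) hx.1,
    fun h => hx.2 (by simpa using mul_mem (inv_mem hc) h)⟩

/- ### List helpers -/

theorem forall₂_head? {α β} {R : α → β → Prop} {L : List α} {M : List β}
    (h : List.Forall₂ R L M) {a} (ha : a ∈ L.head?) : ∃ b ∈ M.head?, R a b := by
  cases h with
  | nil => simp at ha
  | cons hab h => simp_all

theorem forall₂_head?' {α β} {R : α → β → Prop} {L : List α} {M : List β}
    (h : List.Forall₂ R L M) {b} (hb : b ∈ M.head?) : ∃ a ∈ L.head?, R a b := by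
  cases h with
  | nil => simp at hb
  | cons hab h => simp_all

theorem forall₂_revinv {L : List (Amalg φ ψ)} {bs : List Bool}
    (h : List.Forall₂ (Rel φ ψ) L bs) :
    List.Forall₂ (Rel φ ψ) (L.reverse.map (·⁻¹)) bs.reverse := by
  rw [List.map_reverse]
  apply List.forall₂_reverse_iff.2
  rw [List.forall₂_map_left_iff]
  exact h.imp fun _ _ ha => Rel.inv ha

theorem forall₂_concat {α β} {R : α → β → Prop} {l₁ : List α} {l₂ : List β} {a b} :
    List.Forall₂ R (l₁ ++ [a]) (l₂ ++ [b]) ↔ List.Forall₂ R l₁ l₂ ∧ R a b := by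
  rw [← List.forall₂_reverse_iff]
  simp only [List.reverse_append, List.reverse_singleton, List.singleton_append,
    List.forall₂_cons, List.forall₂_reverse_iff]
  tauto

theorem forall₂_chain' {α β} {R : α → β → Prop} {S : β → β → Prop} {T : α → α → Prop}
    {L : List α} {M : List β} (h : List.Forall₂ R L M) (hc : M.Chain' S)
    (hT : ∀ a b a' b', R a b → R a' b' → S b b' → T a a') : L.Chain' T := by
  induction h with
  | nil => exact List.isChain_nil
  | @cons a b l m hab h ih =>
    refine List.isChain_cons.2 ⟨?_, ih (List.isChain_cons.1 hc).2⟩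
    intro y hy
    obtain ⟨b', hb', hyb'⟩ := forall₂_head? h hy
    exact hT _ _ _ _ hab hyb' ((List.isChain_cons.1 hc).1 b' hb')

theorem forall₂_map_same {α β γ} {R : β → γ → Prop} {f : α → β} {g : α → γ} {l : List α}
    (h : ∀ a ∈ l, R (f a) (g a)) : List.Forall₂ R (l.map f) (l.map g) := by
  induction l with
  | nil => simp
  | cons a l ih => simp_all

end AmalgCR
namespace AmalgCR

open Monoid Monoid.PushoutI List Subgroup

variable {A B C : Type u} [Group A] [Group B] [Group C] {φ : C →* A} {ψ : C →* B}

theorem forall₂_mem_left {α β} {R : α → β → Prop} {L : List α} {M : List β}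
    (h : List.Forall₂ R L M) {a} (ha : a ∈ L) : ∃ b ∈ M, R a b := by
  induction h with
  | nil => simp at ha
  | cons hab h ih =>
    rcases List.mem_cons.1 ha with rfl | ha'
    · exact ⟨_, List.mem_cons_self, hab⟩
    · obtain ⟨b, hb, hab'⟩ := ih ha'
      exact ⟨b, List.mem_cons_of_mem _ hb, hab'⟩

theorem RF.reducedForm (hφ : Function.Injective φ) (hψ : Function.Injective ψ)
    {c : Amalg φ ψ} {L : List (Amalg φ ψ)} {bs : List Bool}
    (h : RF φ ψ c L bs) : ReducedForm φ ψ c L := by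
  obtain ⟨hc, hf, hch⟩ := h
  refine ⟨hc, ?_, ?_⟩
  · intro x hx
    obtain ⟨b, _, hxb⟩ := forall₂_mem_left hf hx
    refine ⟨?_, hxb.2⟩
    cases b
    · exact Or.inr hxb.1
    · exact Or.inl hxb.1
  · refine forall₂_chain' hf hch ?_
    rintro x b y b' hxb hyb' hbb'
    constructor
    · intro hx
      have hb : b = true := (rel_facA hφ hψ hxb).1 hx
      have : b' = false := by simp [hb] at hbb'; simp [hbb']
      exact (rel_facB hφ hψ hyb').2 this
    · intro hx
      have hb : b = false := (rel_facB hφ hψ hxb).1 hx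
      have : b' = true := by simp [hb] at hbb'; simp [hbb']
      exact (rel_facA hφ hψ hyb').2 this

theorem ReducedForm.rf (hφ : Function.Injective φ) (hψ : Function.Injective ψ)
    {c : Amalg φ ψ} {L : List (Amalg φ ψ)}
    (h : ReducedForm φ ψ c L) : ∃ bs, RF φ ψ c L bs := by
  obtain ⟨hc, hm, hch⟩ := h
  suffices hs : ∃ bs, List.Forall₂ (Rel φ ψ) L bs ∧ bs.Chain' (· ≠ ·) by
    obtain ⟨bs, h1, h2⟩ := hs
    exact ⟨bs, hc, h1, h2⟩
  clear hc
  induction L with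
  | nil => exact ⟨[], List.Forall₂.nil, List.isChain_nil⟩
  | cons a l ih =>
    obtain ⟨bs, h1, h2⟩ := ih (fun x hx => hm x (List.mem_cons_of_mem _ hx))
      (List.isChain_cons.1 hch).2
    obtain ⟨hab, hnc⟩ := hm a (List.mem_cons_self)
    have hex : ∃ b, Rel φ ψ a b := by
      rcases hab with h | h
      · exact ⟨true, h, hnc⟩
      · exact ⟨false, h, hnc⟩
    obtain ⟨b, hb⟩ := hex
    refine ⟨b :: bs, List.Forall₂.cons hb h1, List.isChain_cons.2 ⟨?_, h2⟩⟩
    intro b' hb'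
    obtain ⟨y, hy, hyb'⟩ := forall₂_head?' h1 hb'
    have hT := (List.isChain_cons.1 hch).1 y hy
    intro heq
    cases hbool : b with
    | true =>
      have ha : a ∈ facA φ ψ := (rel_facA hφ hψ hb).2 hbool
      have : y ∈ facB φ ψ := hT.1 ha
      have : b' = false := (rel_facB hφ hψ hyb').1 this
      simp_all
    | false =>
      have ha : a ∈ facB φ ψ := (rel_facB hφ hψ hb).2 hbool
      have : y ∈ facA φ ψ := hT.2 ha
      have : b' = true := (rel_facA hφ hψ hyb').1 this
      simp_all

/- ### Relating `RF` to mathlib's normal form -/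

theorem exists_word (hφ : Function.Injective φ) (hψ : Function.Injective ψ)
    {L : List (Amalg φ ψ)} {bs : List Bool}
    (h : List.Forall₂ (Rel φ ψ) L bs) (hc : bs.Chain' (· ≠ ·)) :
    ∃ w : Monoid.CoprodI.Word (Fac A B),
      Monoid.PushoutI.Reduced (amalgHom φ ψ) w ∧
      w.toList.map Sigma.fst = bs ∧
      Monoid.PushoutI.ofCoprodI w.prod = L.prod := by
  induction h with
  | nil =>
    refine ⟨.empty, ?_, ?_, ?_⟩
    · intro g hg; simp [Monoid.CoprodI.Word.empty] at hg
    · simp [Monoid.CoprodI.Word.empty]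
    · rw [Monoid.CoprodI.Word.prod_empty]; simp
  | @cons x b l m hxb h ih =>
    obtain ⟨w, hred, hmap, hprod⟩ := ih (List.isChain_cons.1 hc).2
    obtain ⟨gx, hgx⟩ := hxb.1
    have hgr : gx ∉ ((amalgHom φ ψ) b).range := by
      rintro ⟨h0, rfl⟩
      exact hxb.2 ⟨h0, by rw [← hgx, Monoid.PushoutI.of_apply_eq_base]⟩
    have hg1 : gx ≠ 1 := by
      rintro rfl
      exact hxb.2 (by rw [← hgx, map_one]; exact one_mem _)
    have hchain : (⟨b, gx⟩ :: w.toList).Chain' (fun l l' => l.fst ≠ l'.fst) := by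
      refine List.isChain_cons.2 ⟨?_, w.chain_ne⟩
      intro y hy
      have : y.fst ∈ m.head? := by
        rw [← hmap, List.head?_map, hy]; rfl
      exact (List.isChain_cons.1 hc).1 y.fst this
    refine ⟨⟨⟨b, gx⟩ :: w.toList, ?_, hchain⟩, ?_, ?_, ?_⟩
    · rintro l hl
      rcases List.mem_cons.1 hl with rfl | hl'
      · exact hg1
      · exact w.ne_one l hl'
    · intro g hg
      rcases List.mem_cons.1 hg with rfl | hg'
      · exact hgr
      · exact hred g hg'
    · simp [hmap]
    · show Monoid.PushoutI.ofCoprodI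
        ((List.map (fun l => Monoid.CoprodI.of l.snd) (⟨b, gx⟩ :: w.toList)).prod) = _
      rw [List.map_cons, List.prod_cons, map_mul]
      show Monoid.PushoutI.ofCoprodI (Monoid.CoprodI.of gx) * _ = _
      rw [Monoid.PushoutI.ofCoprodI_of, hgx]
      rw [List.prod_cons, ← hprod]
      rfl

theorem rf_nf (hφ : Function.Injective φ) (hψ : Function.Injective ψ)
    (d : Monoid.PushoutI.NormalWord.Transversal (amalgHom φ ψ))
    {c : Amalg φ ψ} {L : List (Amalg φ ψ)} {bs : List Bool}
    (h : RF φ ψ c L bs) :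
    ∃ w : Monoid.PushoutI.NormalWord d, w.prod = c * L.prod ∧
      w.toList.map Sigma.fst = bs := by
  obtain ⟨hc, hf, hch⟩ := h
  obtain ⟨w, hred, hmap, hprod⟩ := exists_word hφ hψ hf hch
  obtain ⟨w', hw'prod, hw'map⟩ := hred.exists_normalWord_prod_eq d
  obtain ⟨h0, rfl⟩ := hc
  refine ⟨h0 • w', ?_, ?_⟩
  · rw [Monoid.PushoutI.NormalWord.prod_base_smul, hw'prod, hprod]
  · rw [Monoid.PushoutI.NormalWord.base_smul_def']
    rw [hw'map, hmap]

theorem bs_unique (hφ : Function.Injective φ) (hψ : Function.Injective ψ)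
    {c₁ c₂ : Amalg φ ψ} {L₁ L₂ : List (Amalg φ ψ)} {bs₁ bs₂ : List Bool}
    (h₁ : RF φ ψ c₁ L₁ bs₁) (h₂ : RF φ ψ c₂ L₂ bs₂)
    (heq : c₁ * L₁.prod = c₂ * L₂.prod) : bs₁ = bs₂ := by
  obtain ⟨d⟩ := Monoid.PushoutI.NormalWord.transversal_nonempty (amalgHom φ ψ) (injPhi hφ hψ)
  obtain ⟨w₁, hp₁, hm₁⟩ := rf_nf hφ hψ d h₁
  obtain ⟨w₂, hp₂, hm₂⟩ := rf_nf hφ hψ d h₂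
  have : w₁ = w₂ := Monoid.PushoutI.NormalWord.prod_injective (by rw [hp₁, hp₂, heq])
  rw [← hm₁, ← hm₂, this]

theorem RF.length_eq {c : Amalg φ ψ} {L : List (Amalg φ ψ)} {bs : List Bool}
    (h : RF φ ψ c L bs) : L.length = bs.length :=
  h.2.1.length_eq

theorem exists_rf (hφ : Function.Injective φ) (hψ : Function.Injective ψ)
    (g : Amalg φ ψ) : ∃ c L bs, RF φ ψ c L bs ∧ g = c * L.prod := by
  obtain ⟨d⟩ := Monoid.PushoutI.NormalWord.transversal_nonempty (amalgHom φ ψ) (injPhi hφ hψ)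
  classical
  let w : Monoid.PushoutI.NormalWord d := g • Monoid.PushoutI.NormalWord.empty
  have hprod : w.prod = g := by
    show (g • Monoid.PushoutI.NormalWord.empty).prod = g
    rw [Monoid.PushoutI.NormalWord.prod_smul, Monoid.PushoutI.NormalWord.prod_empty, mul_one]
  refine ⟨Monoid.PushoutI.base (amalgHom φ ψ) w.head,
    w.toList.map (fun l => Monoid.PushoutI.of (φ := amalgHom φ ψ) l.fst l.snd),
    w.toList.map Sigma.fst, ⟨⟨w.head, rfl⟩, ?_, ?_⟩, ?_⟩
  · refine forall₂_map_same ?_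
    intro l hl
    refine ⟨⟨l.snd, rfl⟩, ?_⟩
    rintro ⟨h0, hh0⟩
    have hrange : l.snd ∈ ((amalgHom φ ψ) l.fst).range := by
      refine ⟨h0, ?_⟩
      apply Monoid.PushoutI.of_injective (injPhi hφ hψ) l.fst
      rw [← hh0, Monoid.PushoutI.of_apply_eq_base]
    have hset : l.snd ∈ d.set l.fst := w.normalized l.fst l.snd (by
      cases l; exact hl)
    have h1 : ((d.compl l.fst).equiv l.snd).2 = l.snd :=
      ((d.compl l.fst).equiv_snd_eq_self_iff_mem (one_mem _)).2 hset
    have h2 : (((d.compl l.fst).equiv l.snd).2 : Fac A B l.fst) = 1 :=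
      ((d.compl l.fst).coe_equiv_snd_eq_one_iff_mem (d.one_mem _)).2 hrange
    have : l.snd = 1 := by rw [← h1]; exact_mod_cast h2
    exact w.ne_one l (by cases l; exact hl) this
  · rw [List.Chain', List.isChain_map]
    exact w.chain_ne
  · rw [← hprod]
    show _ = _ * _
    rw [Monoid.PushoutI.NormalWord.prod]
    congr 1
    show Monoid.PushoutI.ofCoprodI ((w.toList.map fun l => Monoid.CoprodI.of l.snd).prod) = _
    rw [map_list_prod]
    congr 1
    rw [List.map_map]
    refine List.map_congr_left ?_
    intro l _
    show Monoid.PushoutI.ofCoprodI (Monoid.CoprodI.of l.snd) = _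
    exact Monoid.PushoutI.ofCoprodI_of l.fst l.snd

end AmalgCR
namespace AmalgCR

open Monoid Monoid.PushoutI List Subgroup

variable {A B C : Type u} [Group A] [Group B] [Group C] {φ : C →* A} {ψ : C →* B}

theorem forall₂_concat_of_ne_nil {α β} {R : α → β → Prop} {L : List α} {M : List β}
    (h : List.Forall₂ R L M) (hne : L ≠ []) :
    ∃ L₀ a M₀ b, L = L₀ ++ [a] ∧ M = M₀ ++ [b] ∧ List.Forall₂ R L₀ M₀ ∧ R a b := by
  rcases L.eq_nil_or_concat with rfl | ⟨L₀, a, rfl⟩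
  · exact absurd rfl hne
  rcases M.eq_nil_or_concat with rfl | ⟨M₀, b, rfl⟩
  · have := h.length_eq; simp at this
  simp only [List.concat_eq_append] at h ⊢
  rw [forall₂_concat] at h
  exact ⟨L₀, a, M₀, b, rfl, rfl, h.1, h.2⟩

theorem mk0 {g : Amalg φ ψ} (hg : g ∈ amalgC φ ψ) : CyclicallyReduced φ ψ g :=
  ⟨g, [], by simp, ⟨⟨hg, by simp, List.isChain_nil⟩, Or.inl rfl⟩⟩

theorem mk2 (hφ : Function.Injective φ) (hψ : Function.Injective ψ)
    {c : Amalg φ ψ} {L : List (Amalg φ ψ)} {bs : List Bool} {a z : Amalg φ ψ} {ba bz : Bool}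
    (hrf : RF φ ψ c L bs) (hL : L.head? = some a) (hLl : L.getLast? = some z)
    (hba : Rel φ ψ a ba) (hbz : Rel φ ψ z bz) (hne : ba ≠ bz) (hlen : 2 ≤ L.length) :
    CyclicallyReduced φ ψ (c * L.prod) := by
  refine ⟨c, L, rfl, hrf.reducedForm hφ hψ, Or.inr (Or.inr ⟨hlen, ?_⟩)⟩
  intro x y hx hy
  have hxa : a = x := by rw [hL] at hx; exact Option.some_inj.1 hx
  have hyz : z = y := by rw [hLl] at hy; exact Option.some_inj.1 hy
  subst hxa; subst hyz
  constructor
  · intro hA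
    have h1 : ba = true := (rel_facA hφ hψ hba).1 hA
    have h2 : bz = false := by revert hne; rw [h1]; cases bz <;> simp
    exact (rel_facB hφ hψ hbz).2 h2
  · intro hB
    have h1 : ba = false := (rel_facB hφ hψ hba).1 hB
    have h2 : bz = true := by revert hne; rw [h1]; cases bz <;> simp
    exact (rel_facA hφ hψ hbz).2 h2

theorem exists_cr (hφ : Function.Injective φ) (hψ : Function.Injective ψ) :
    ∀ (n : ℕ) (c : Amalg φ ψ) (L : List (Amalg φ ψ)) (bs : List Bool),
      RF φ ψ c L bs → bs.length ≤ n →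
      ∃ g₀ x : Amalg φ ψ, x⁻¹ * (c * L.prod) * x = g₀ ∧ CyclicallyReduced φ ψ g₀ := by
  intro n
  induction n with
  | zero =>
    intro c L bs hrf hlen
    have hbs : bs = [] := List.eq_nil_of_length_eq_zero (Nat.le_zero.1 hlen)
    subst hbs
    have hL : L = [] := List.eq_nil_of_length_eq_zero (by simpa using hrf.length_eq)
    subst hL
    exact ⟨c, 1, by simp, mk0 (by simpa using hrf.1)⟩
  | succ n ih =>
    intro c L bs hrf hlen
    obtain ⟨hc, hf, hch⟩ := hrf
    cases hf with
    | nil => exact ⟨c, 1, by simp, mk0 (by simpa using hc)⟩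
    | @cons a ba L' bs' ha hf' =>
      by_cases hL' : L' = []
      · -- single letter
        subst hL'
        cases hf'
        by_cases hex : ∃ x, x⁻¹ * (c * [a].prod) * x ∈ amalgC φ ψ
        · obtain ⟨x, hx⟩ := hex
          exact ⟨_, x, rfl, mk0 hx⟩
        · push_neg at hex
          exact ⟨c * [a].prod, 1, by simp,
            ⟨c, [a], rfl, ⟨RF.reducedForm hφ hψ ⟨hc, List.Forall₂.cons ha List.Forall₂.nil, hch⟩,
              Or.inr (Or.inl ⟨rfl, hex⟩)⟩⟩⟩
      · -- length ≥ 2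
        obtain ⟨Lmid, z, bsmid, bz, rfl, rfl, hfmid, hz⟩ := forall₂_concat_of_ne_nil hf' hL'
        have hLlast : (a :: (Lmid ++ [z])).getLast? = some z := by
          rw [show a :: (Lmid ++ [z]) = (a :: Lmid) ++ [z] by simp]
          exact List.getLast?_concat
        by_cases hba : ba = bz
        · -- cyclic reduction step
          subst hba
          set t₁ := c * a with ht₁
          set y := z * (c * a) with hy
          have hyr : y ∈ (Monoid.PushoutI.of (φ := amalgHom φ ψ) ba).range :=
            mul_mem hz.1 (mul_mem (mem_fac_of_mem_C hc ba) ha.1)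
          by_cases hyC : y ∈ amalgC φ ψ
          · rcases eq_or_ne Lmid [] with rfl | hne
            · -- conjugate is y ∈ C
              refine ⟨y, t₁, ?_, mk0 hyC⟩
              rw [hy, ht₁]
              simp only [List.prod_cons, List.prod_append, List.prod_nil, List.prod_singleton]
              group
            · -- strip two letters
              obtain ⟨Lmid₂, w, bsmid₂, bw, rfl, rfl, hfmid₂, hw⟩ :=
                forall₂_concat_of_ne_nil hfmid hne
              have hch' : (bsmid₂ ++ [bw]).Chain' (· ≠ ·) := by
                have h1 := (List.isChain_cons.1 hch).2
                rw [show (bsmid₂ ++ [bw]) ++ [ba] = bsmid₂ ++ [bw] ++ [ba] by simp] at h1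
                exact (List.isChain_append.1 h1).1
              have hrf' : RF φ ψ 1 (Lmid₂ ++ [w * y]) (bsmid₂ ++ [bw]) :=
                ⟨one_mem _, forall₂_concat.2 ⟨hfmid₂, hw.mul_C hyC⟩, hch'⟩
              have hlen' : (bsmid₂ ++ [bw]).length ≤ n := by
                have : (ba :: ((bsmid₂ ++ [bw]) ++ [ba])).length ≤ n + 1 := hlen
                simp at this ⊢; omega
              obtain ⟨g₀, x₀, hx₀, hcr⟩ := ih 1 (Lmid₂ ++ [w * y]) (bsmid₂ ++ [bw]) hrf' hlen'
              refine ⟨g₀, t₁ * x₀, ?_, hcr⟩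
              have key : t₁⁻¹ * (c * (a :: ((Lmid₂ ++ [w]) ++ [z])).prod) * t₁ =
                  1 * (Lmid₂ ++ [w * y]).prod := by
                rw [ht₁, hy]
                simp only [List.prod_cons, List.prod_append, List.prod_nil, List.prod_singleton]
                group
              have h2 : (t₁ * x₀)⁻¹ * (c * (a :: ((Lmid₂ ++ [w]) ++ [z])).prod) * (t₁ * x₀) =
                  x₀⁻¹ * (t₁⁻¹ * (c * (a :: ((Lmid₂ ++ [w]) ++ [z])).prod) * t₁) * x₀ := by
                group
              rw [h2, key, hx₀]
          · -- strip one letter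
            have hrf' : RF φ ψ 1 (Lmid ++ [y]) (bsmid ++ [ba]) :=
              ⟨one_mem _, forall₂_concat.2 ⟨hfmid, ⟨hyr, hyC⟩⟩, (List.isChain_cons.1 hch).2⟩
            have hlen' : (bsmid ++ [ba]).length ≤ n := by
              have : (ba :: (bsmid ++ [ba])).length ≤ n + 1 := hlen
              simp at this ⊢; omega
            obtain ⟨g₀, x₀, hx₀, hcr⟩ := ih 1 (Lmid ++ [y]) (bsmid ++ [ba]) hrf' hlen'
            refine ⟨g₀, t₁ * x₀, ?_, hcr⟩
            have key : t₁⁻¹ * (c * (a :: (Lmid ++ [z])).prod) * t₁ =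
                1 * (Lmid ++ [y]).prod := by
              rw [ht₁, hy]
              simp only [List.prod_cons, List.prod_append, List.prod_nil, List.prod_singleton]
              group
            have h2 : (t₁ * x₀)⁻¹ * (c * (a :: (Lmid ++ [z])).prod) * (t₁ * x₀) =
                x₀⁻¹ * (t₁⁻¹ * (c * (a :: (Lmid ++ [z])).prod) * t₁) * x₀ := by
              group
            rw [h2, key, hx₀]
        · -- already cyclically reduced
          refine ⟨_, 1, by simp, mk2 hφ hψ ⟨hc, List.Forall₂.cons ha hf', hch⟩
            rfl hLlast ha hz hba ?_⟩
          simp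
end AmalgCR
namespace AmalgCR

open Monoid Monoid.PushoutI List Subgroup

variable {A B C : Type u} [Group A] [Group B] [Group C] {φ : C →* A} {ψ : C →* B}

theorem forall₂_getLast?' {α β} {R : α → β → Prop} {L : List α} {M : List β}
    (h : List.Forall₂ R L M) {b} (hb : b ∈ M.getLast?) : ∃ a ∈ L.getLast?, R a b := by
  rw [← List.head?_reverse] at hb
  obtain ⟨a, ha, hab⟩ := forall₂_head?' (List.forall₂_reverse_iff.2 h) hb
  rw [List.head?_reverse] at ha
  exact ⟨a, ha, hab⟩

theorem forall₂_getLast? {α β} {R : α → β → Prop} {L : List α} {M : List β}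
    (h : List.Forall₂ R L M) {a} (ha : a ∈ L.getLast?) : ∃ b ∈ M.getLast?, R a b := by
  rw [← List.head?_reverse] at ha
  obtain ⟨b, hb, hab⟩ := forall₂_head? (List.forall₂_reverse_iff.2 h) ha
  rw [List.head?_reverse] at hb
  exact ⟨b, hb, hab⟩

/-- Conjugating a reduced form by an element of `C` keeps the same annotation `bs`. -/
theorem conj_C_rf {t c : Amalg φ ψ} {L : List (Amalg φ ψ)} {bs : List Bool}
    (ht : t ∈ amalgC φ ψ) (hrf : RF φ ψ c L bs) (hne : L ≠ []) :
    ∃ L₂, RF φ ψ (t⁻¹ * c) L₂ bs ∧ t⁻¹ * (c * L.prod) * t = (t⁻¹ * c) * L₂.prod := by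
  obtain ⟨hc, hf, hch⟩ := hrf
  obtain ⟨L₀, z, bs₀, bz, rfl, rfl, hf₀, hz⟩ := forall₂_concat_of_ne_nil hf hne
  refine ⟨L₀ ++ [z * t], ⟨mul_mem (inv_mem ht) hc,
    forall₂_concat.2 ⟨hf₀, hz.mul_C ht⟩, hch⟩, ?_⟩
  simp only [List.prod_append, List.prod_singleton]
  group

/-- Key concatenation: conjugating a length-`n` reduced form with extreme letters not in the
factor of the first letter of `Mt` gives a reduced form of length `n + 2 |Mt|`. -/
theorem rf_conj_concat {Mt : List (Amalg φ ψ)} {bst : List Bool}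
    {L₂ : List (Amalg φ ψ)} {bs₂ : List Bool}
    (hMt : List.Forall₂ (Rel φ ψ) Mt bst) (hcht : bst.Chain' (· ≠ ·))
    (h₂f : List.Forall₂ (Rel φ ψ) L₂ bs₂) (h₂c : bs₂.Chain' (· ≠ ·))
    (hne : bs₂ ≠ [])
    (hj₁ : ∀ b ∈ bst.head?, ∀ b₂ ∈ bs₂.head?, b ≠ b₂)
    (hj₂ : ∀ b ∈ bst.head?, ∀ b₂ ∈ bs₂.getLast?, b₂ ≠ b) :
    RF φ ψ 1 (Mt.reverse.map (·⁻¹) ++ L₂ ++ Mt) (bst.reverse ++ bs₂ ++ bst) ∧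
    (Mt.prod)⁻¹ * L₂.prod * Mt.prod = (Mt.reverse.map (·⁻¹) ++ L₂ ++ Mt).prod := by
  have hlen := hMt.length_eq
  have hrevchain : bst.reverse.Chain' (· ≠ ·) := by
    rw [List.Chain', List.isChain_reverse]
    exact hcht.imp fun a b h => h.symm
  constructor
  · refine ⟨one_mem _, ?_, ?_⟩
    · exact List.rel_append (List.rel_append (forall₂_revinv hMt) h₂f) hMt
    · rw [List.Chain', List.isChain_append]
      refine ⟨?_, hcht, ?_⟩
      · rw [List.isChain_append]
        refine ⟨hrevchain, h₂c, ?_⟩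
        intro x hx y hy
        rw [List.getLast?_reverse] at hx
        exact hj₁ x hx y hy
      · intro x hx y hy
        rw [List.getLast?_append_of_ne_nil _ hne] at hx
        exact hj₂ y hy x hx
  · rw [List.prod_append, List.prod_append, List.map_reverse, ← List.prod_inv_reverse]

set_option maxHeartbeats 2000000 in
set_option maxRecDepth 8000 in
theorem conj_len_ge (hφ : Function.Injective φ) (hψ : Function.Injective ψ) :
    ∀ (k : ℕ) (t ct : Amalg φ ψ) (Mt : List (Amalg φ ψ)) (bst : List Bool),
      RF φ ψ ct Mt bst → t = ct * Mt.prod → bst.length ≤ k →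
      ∀ (c : Amalg φ ψ) (L : List (Amalg φ ψ)) (bs : List Bool), RF φ ψ c L bs →
      2 ≤ bs.length →
      (∀ b₁ ∈ bs.head?, ∀ b₂ ∈ bs.getLast?, b₁ ≠ b₂) →
      ∀ (c' : Amalg φ ψ) (L' : List (Amalg φ ψ)) (bs' : List Bool), RF φ ψ c' L' bs' →
      t⁻¹ * (c * L.prod) * t = c' * L'.prod →
      bs.length ≤ bs'.length := by
  intro k
  induction k with
  | zero =>
    intro t ct Mt bst hrft hteq hlent c L bs hrf hlen hends c' L' bs' hrf' hconj
    -- t ∈ C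
    have hbst : bst = [] := List.eq_nil_of_length_eq_zero (Nat.le_zero.1 hlent)
    subst hbst
    have hMt : Mt = [] := List.eq_nil_of_length_eq_zero (by simpa using hrft.length_eq)
    subst hMt
    have ht : t ∈ amalgC φ ψ := by rw [hteq]; simpa using hrft.1
    have hLne : L ≠ [] := by
      intro h
      rw [hrf.length_eq.symm, h] at hlen; simp at hlen
    obtain ⟨L₂, hrf₂, heq₂⟩ := conj_C_rf ht hrf hLne
    have : bs = bs' := bs_unique hφ hψ hrf₂ hrf' (by rw [← heq₂, hconj])
    exact this ▸ le_refl _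
  | succ k ih =>
    intro t ct Mt bst hrft hteq hlent c L bs hrf hlen hends c' L' bs' hrf' hconj
    obtain ⟨hct, hft, hcht⟩ := hrft
    cases hft with
    | nil =>
      -- t ∈ C again
      have ht : t ∈ amalgC φ ψ := by rw [hteq]; simpa using hct
      have hLne : L ≠ [] := by
        intro h
        rw [hrf.length_eq.symm, h] at hlen; simp at hlen
      obtain ⟨L₂, hrf₂, heq₂⟩ := conj_C_rf ht hrf hLne
      have : bs = bs' := bs_unique hφ hψ hrf₂ hrf' (by rw [← heq₂, hconj])
      exact this ▸ le_refl _
    | @cons m bm Mt' bst' hmrel hft' =>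
      obtain ⟨hc, hf, hch⟩ := hrf
      cases hf with
      | nil => simp at hlen
      | @cons a ba T bsT ha hf' =>
        have hTne : T ≠ [] := by
          intro h; subst h; cases hf'; simp at hlen
        obtain ⟨Lmid, z, bsmid, bz, rfl, rfl, hfmid, hz⟩ := forall₂_concat_of_ne_nil hf' hTne
        have hbshape : ba :: (bsmid ++ [bz]) = (ba :: bsmid) ++ [bz] := by simp
        have hlast : (ba :: (bsmid ++ [bz])).getLast? = some bz := by
          rw [hbshape]; exact List.getLast?_concat
        have hba_ne : ba ≠ bz := hends ba rfl bz hlast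
        have hchtail : (bsmid ++ [bz]).Chain' (· ≠ ·) := (List.isChain_cons.1 hch).2
        have hchpre : ((ba :: bsmid)).Chain' (· ≠ ·) := by
          have := hch; rw [hbshape, List.Chain', List.isChain_append] at this; exact this.1
        have hjunc : ∀ x ∈ (ba :: bsmid).getLast?, x ≠ bz := by
          have := hch; rw [hbshape, List.Chain', List.isChain_append] at this
          intro x hx; exact this.2.2 x hx bz rfl
        have hchtcons := List.isChain_cons.1 hcht
        by_cases hm : bm = bz
        · subst hm
          -- first letter of t is in the factor of the last letter of L
          set u := m⁻¹ * (ct⁻¹ * c) with hu_def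
          set y := z * (ct * m) with hy_def
          have hu : Rel φ ψ u bm := (Rel.inv hmrel).mul_C (mul_mem (inv_mem hct) hc)
          have hyr : y ∈ (Monoid.PushoutI.of (φ := amalgHom φ ψ) bm).range :=
            mul_mem hz.1 (mul_mem (mem_fac_of_mem_C hct bm) hmrel.1)
          by_cases hyC : y ∈ amalgC φ ψ
          · -- cancellation: recurse with cyclic permutation
            have hyu : Rel φ ψ (y * u) bm := hu.C_mul hyC
            have hrf₃ : RF φ ψ 1 ((y * u) :: a :: Lmid) (bm :: ba :: bsmid) := by
              refine ⟨one_mem _, List.Forall₂.cons hyu (List.Forall₂.cons ha hfmid), ?_⟩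
              refine List.isChain_cons.2 ⟨?_, hchpre⟩
              intro b' hb'
              have hba' : ba = b' := by simpa using hb'
              subst hba'
              exact fun h => hba_ne h.symm
            have hends₃ : ∀ b₁ ∈ (bm :: ba :: bsmid).head?,
                ∀ b₂ ∈ (bm :: ba :: bsmid).getLast?, b₁ ≠ b₂ := by
              intro b₁ hb₁ b₂ hb₂
              have hb₁' : bm = b₁ := by simpa using hb₁
              rw [List.getLast?_cons_cons] at hb₂
              subst hb₁'
              exact fun h => (hjunc b₂ hb₂) h.symm
            have hrft'' : RF φ ψ y Mt' bst' := ⟨hyC, hft', hchtcons.2⟩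
            have key : t⁻¹ * (c * ((a :: (Lmid ++ [z])).prod)) * t =
                (y * Mt'.prod)⁻¹ * (1 * ((y * u) :: a :: Lmid).prod) * (y * Mt'.prod) := by
              rw [hteq, hu_def, hy_def]
              simp only [List.prod_cons, List.prod_append, List.prod_singleton, List.prod_nil, mul_one, one_mul]
              group
            have hconj' : (y * Mt'.prod)⁻¹ * (1 * ((y * u) :: a :: Lmid).prod) *
                (y * Mt'.prod) = c' * L'.prod := key.symm.trans hconj
            have hle := ih (y * Mt'.prod) y Mt' bst' hrft'' rfl (by
                have : (bm :: bst').length ≤ k + 1 := hlent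
                simp only [List.length_cons] at this ⊢; omega)
              1 ((y * u) :: a :: Lmid) (bm :: ba :: bsmid) hrf₃ (by simp only [List.length_append, List.length_cons, List.length_reverse, List.length_nil]; omega)
              hends₃ c' L' bs' hrf' hconj'
            have h1 : ((bm :: ba :: bsmid)).length = (ba :: (bsmid ++ [bm])).length := by
              simp
            omega
          · -- no cancellation: explicit long reduced form
            have hyrel : Rel φ ψ y bm := ⟨hyr, hyC⟩
            have h₂f : List.Forall₂ (Rel φ ψ) (u :: ((a :: Lmid) ++ [y]))
                (bm :: ((ba :: bsmid) ++ [bm])) :=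
              List.Forall₂.cons hu (forall₂_concat.2 ⟨List.Forall₂.cons ha hfmid, hyrel⟩)
            have h₂c : (bm :: ((ba :: bsmid) ++ [bm])).Chain' (· ≠ ·) := by
              refine List.isChain_cons.2 ⟨?_, ?_⟩
              · intro b' hb'
                have hba' : ba = b' := by
                  rw [List.head?_append_of_ne_nil _ (by simp : (ba :: bsmid) ≠ [])] at hb'
                  simpa using hb'
                subst hba'
                exact fun h => hba_ne h.symm
              · rw [List.isChain_append]
                exact ⟨hchpre, List.isChain_singleton _, fun x hx b' hb' => by
                  have hbm' : bm = b' := by simpa using hb'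
                  subst hbm'
                  exact hjunc x hx⟩
            obtain ⟨hrfbig, heqbig⟩ := rf_conj_concat hft' hchtcons.2 h₂f h₂c (by simp)
              (fun b hb b₂ hb₂ => by
                have hbm' : bm = b₂ := by simpa using hb₂
                subst hbm'
                exact fun h => (hchtcons.1 b hb) h.symm)
              (fun b hb b₂ hb₂ => by
                have hbm' : bm = b₂ := by
                  rw [show bm :: ((ba :: bsmid) ++ [bm]) = (bm :: (ba :: bsmid)) ++ [bm]
                    by simp, List.getLast?_concat] at hb₂
                  simpa using hb₂
                subst hbm'
                exact hchtcons.1 b hb)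
            have key : t⁻¹ * (c * ((a :: (Lmid ++ [z])).prod)) * t =
                (Mt'.prod)⁻¹ * (u :: ((a :: Lmid) ++ [y])).prod * Mt'.prod := by
              rw [hteq, hu_def, hy_def]
              simp only [List.prod_cons, List.prod_append, List.prod_singleton, List.prod_nil, mul_one, one_mul]
              group
            have : bst'.reverse ++ (bm :: ((ba :: bsmid) ++ [bm])) ++ bst' = bs' :=
              bs_unique hφ hψ hrfbig hrf' (by rw [one_mul, ← heqbig, ← key, hconj])
            have hlen' : bs'.length =
                bst'.length + (bsmid.length + 3) + bst'.length := by
              rw [← this]; simp only [List.length_append, List.length_cons, List.length_reverse, List.length_nil]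
            have hlenbs : (ba :: (bsmid ++ [bm])).length = bsmid.length + 2 := by
              simp only [List.length_append, List.length_cons, List.length_reverse, List.length_nil]
            omega
        · -- first letter of t is in the factor of the first letter of L
          have hmba : bm = ba := by
            have h1 := hba_ne; have h2 := hm
            revert h1 h2
            cases bm <;> cases ba <;> cases bz <;> simp
          set u := (m⁻¹ * (ct⁻¹ * c)) * a with hu_def
          set zt := z * ct with hzt_def
          have ha' : a ∈ (Monoid.PushoutI.of (φ := amalgHom φ ψ) bm).range := by
            rw [hmba]; exact ha.1
          have hu_range : u ∈ (Monoid.PushoutI.of (φ := amalgHom φ ψ) bm).range :=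
            mul_mem (mul_mem (inv_mem hmrel.1) (mem_fac_of_mem_C
              (mul_mem (inv_mem hct) hc) bm)) ha'
          have hzt : Rel φ ψ zt bz := hz.mul_C hct
          have h₂c' : (((bsmid ++ [bz]) ++ [bm])).Chain' (· ≠ ·) := by
            rw [List.Chain', List.isChain_append]
            refine ⟨hchtail, List.isChain_singleton _, ?_⟩
            intro x hx b' hb'
            have hbm' : bm = b' := by simpa using hb'
            subst hbm'
            rw [List.getLast?_concat] at hx
            have hbz' : bz = x := by simpa using hx
            subst hbz'
            exact fun h => hm h.symm
          have hmidends : ∀ b₁ ∈ ((bsmid ++ [bz]) ++ [bm]).head?,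
              ∀ b₂ ∈ ((bsmid ++ [bz]) ++ [bm]).getLast?, b₁ ≠ b₂ := by
            intro b₁ hb₁ b₂ hb₂
            rw [List.getLast?_concat] at hb₂
            have hb₂' : bm = b₂ := by simpa using hb₂
            subst hb₂'
            rw [List.head?_append_of_ne_nil _ (by simp : bsmid ++ [bz] ≠ [])] at hb₁
            rcases bsmid with _ | ⟨b₀, rest⟩
            · have hbz' : bz = b₁ := by simpa using hb₁
              subst hbz'
              exact fun h => hm h.symm
            · have hb₀' : b₀ = b₁ := by simpa using hb₁
              subst hb₀'
              have hchh : ba ≠ b₀ := (List.isChain_cons.1 hch).1 b₀ rfl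
              exact fun h => hchh (hmba.symm.trans h.symm)
          by_cases huC : u ∈ amalgC φ ψ
          · -- cancellation: recurse, conjugate is already cyclically reduced
            have hrf₂ : RF φ ψ u ((Lmid ++ [zt]) ++ [m]) ((bsmid ++ [bz]) ++ [bm]) :=
              ⟨huC, forall₂_concat.2 ⟨forall₂_concat.2 ⟨hfmid, hzt⟩, hmrel⟩, h₂c'⟩
            have hrft'' : RF φ ψ 1 Mt' bst' := ⟨one_mem _, hft', hchtcons.2⟩
            have key : t⁻¹ * (c * ((a :: (Lmid ++ [z])).prod)) * t =
                (1 * Mt'.prod)⁻¹ * (u * ((Lmid ++ [zt]) ++ [m]).prod) * (1 * Mt'.prod) := by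
              rw [hteq, hu_def, hzt_def]
              simp only [List.prod_cons, List.prod_append, List.prod_singleton, List.prod_nil, mul_one, one_mul]
              group
            have hconj' : (1 * Mt'.prod)⁻¹ * (u * ((Lmid ++ [zt]) ++ [m]).prod) *
                (1 * Mt'.prod) = c' * L'.prod := key.symm.trans hconj
            have hle := ih (1 * Mt'.prod) 1 Mt' bst' hrft'' rfl (by
                have : (bm :: bst').length ≤ k + 1 := hlent
                simp only [List.length_cons] at this ⊢; omega)
              u ((Lmid ++ [zt]) ++ [m]) ((bsmid ++ [bz]) ++ [bm]) hrf₂ (by simp only [List.length_append, List.length_cons, List.length_reverse, List.length_nil]; omega)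
              hmidends c' L' bs' hrf' hconj'
            simp only [List.length_append, List.length_cons, List.length_reverse, List.length_nil] at hle ⊢
            omega
          · -- no cancellation
            have hu : Rel φ ψ u bm := ⟨hu_range, huC⟩
            have h₂f : List.Forall₂ (Rel φ ψ) (u :: ((Lmid ++ [zt]) ++ [m]))
                (bm :: ((bsmid ++ [bz]) ++ [bm])) :=
              List.Forall₂.cons hu (forall₂_concat.2 ⟨forall₂_concat.2 ⟨hfmid, hzt⟩, hmrel⟩)
            have h₂c : (bm :: ((bsmid ++ [bz]) ++ [bm])).Chain' (· ≠ ·) := by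
              refine List.isChain_cons.2 ⟨?_, h₂c'⟩
              intro b' hb'
              rw [List.head?_append_of_ne_nil _ (by simp : bsmid ++ [bz] ≠ [])] at hb'
              rcases bsmid with _ | ⟨b₀, rest⟩
              · have hbz' : bz = b' := by simpa using hb'
                subst hbz'
                exact hm
              · have hb₀' : b₀ = b' := by simpa using hb'
                subst hb₀'
                have hchh : ba ≠ b₀ := (List.isChain_cons.1 hch).1 b₀ rfl
                exact fun h => hchh (hmba.symm.trans h)
            obtain ⟨hrfbig, heqbig⟩ := rf_conj_concat hft' hchtcons.2 h₂f h₂c (by simp)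
              (fun b hb b₂ hb₂ => by
                have hbm' : bm = b₂ := by simpa using hb₂
                subst hbm'
                exact fun h => (hchtcons.1 b hb) h.symm)
              (fun b hb b₂ hb₂ => by
                have hbm' : bm = b₂ := by
                  rw [show bm :: ((bsmid ++ [bz]) ++ [bm]) = (bm :: (bsmid ++ [bz])) ++ [bm]
                    by simp, List.getLast?_concat] at hb₂
                  simpa using hb₂
                subst hbm'
                exact hchtcons.1 b hb)
            have key : t⁻¹ * (c * ((a :: (Lmid ++ [z])).prod)) * t =
                (Mt'.prod)⁻¹ * (u :: ((Lmid ++ [zt]) ++ [m])).prod * Mt'.prod := by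
              rw [hteq, hu_def, hzt_def]
              simp only [List.prod_cons, List.prod_append, List.prod_singleton, List.prod_nil, mul_one, one_mul]
              group
            have : bst'.reverse ++ (bm :: ((bsmid ++ [bz]) ++ [bm])) ++ bst' = bs' :=
              bs_unique hφ hψ hrfbig hrf' (by rw [one_mul, ← heqbig, ← key, hconj])
            have hlen' : bs'.length =
                bst'.length + (bsmid.length + 3) + bst'.length := by
              rw [← this]; simp only [List.length_append, List.length_cons, List.length_reverse, List.length_nil]
            have hlenbs : (ba :: (bsmid ++ [bz])).length = bsmid.length + 2 := by
              simp only [List.length_append, List.length_cons, List.length_reverse, List.length_nil]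
            omega

end AmalgCR
namespace AmalgCR

open Monoid Monoid.PushoutI List Subgroup

variable {A B C : Type u} [Group A] [Group B] [Group C] {φ : C →* A} {ψ : C →* B}

theorem ends_of_cr (hφ : Function.Injective φ) (hψ : Function.Injective ψ)
    {c : Amalg φ ψ} {L : List (Amalg φ ψ)} {bs : List Bool} (hrf : RF φ ψ c L bs)
    (h3 : ∀ x y : Amalg φ ψ, x ∈ L.head? → y ∈ L.getLast? →
      ((x ∈ facA φ ψ → y ∈ facB φ ψ) ∧ (x ∈ facB φ ψ → y ∈ facA φ ψ))) :
    ∀ b₁ ∈ bs.head?, ∀ b₂ ∈ bs.getLast?, b₁ ≠ b₂ := by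
  intro b₁ hb₁ b₂ hb₂
  obtain ⟨a, ha, hab⟩ := forall₂_head?' hrf.2.1 hb₁
  obtain ⟨z, hz, hzb⟩ := forall₂_getLast?' hrf.2.1 hb₂
  have hT := h3 a z ha hz
  cases b₁ with
  | true =>
    have h1 : a ∈ facA φ ψ := (rel_facA hφ hψ hab).2 rfl
    have h2 : z ∈ facB φ ψ := hT.1 h1
    have h3 : b₂ = false := (rel_facB hφ hψ hzb).1 h2
    simp [h3]
  | false =>
    have h1 : a ∈ facB φ ψ := (rel_facB hφ hψ hab).2 rfl
    have h2 : z ∈ facA φ ψ := hT.2 h1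
    have h3 : b₂ = true := (rel_facA hφ hψ hzb).1 h2
    simp [h3]

theorem cr_le (hφ : Function.Injective φ) (hψ : Function.Injective ψ)
    {g₁ g₂ t : Amalg φ ψ} {c₁ c₂ : Amalg φ ψ} {L₁ L₂ : List (Amalg φ ψ)}
    {bs₁ bs₂ : List Bool}
    (h₁ : RF φ ψ c₁ L₁ bs₁) (hg₁ : g₁ = c₁ * L₁.prod)
    (hcr₁ : CyclicallyReducedForm φ ψ c₁ L₁)
    (h₂ : RF φ ψ c₂ L₂ bs₂) (hg₂ : g₂ = c₂ * L₂.prod)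
    (hconj : t⁻¹ * g₁ * t = g₂) : bs₁.length ≤ bs₂.length := by
  rcases hcr₁.2 with h0 | ⟨hl1, hno⟩ | ⟨hl2, h3⟩
  · have : bs₁.length = 0 := by rw [← h₁.length_eq]; exact h0
    omega
  · have hb1 : bs₁.length = 1 := by rw [← h₁.length_eq]; exact hl1
    by_contra hlt
    have hb2 : bs₂.length = 0 := by omega
    have hL2 : L₂ = [] :=
      List.eq_nil_of_length_eq_zero (by rw [h₂.length_eq]; exact hb2)
    have hg2C : g₂ ∈ amalgC φ ψ := by
      rw [hg₂, hL2]; simpa using h₂.1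
    have := hno t
    rw [← hg₁] at this
    exact this (hconj ▸ hg2C)
  · obtain ⟨ct, Mt, bst, hrft, hteq⟩ := exists_rf hφ hψ t
    refine conj_len_ge hφ hψ bst.length t ct Mt bst hrft hteq le_rfl c₁ L₁ bs₁ h₁
      (by rw [← h₁.length_eq]; exact hl2) (ends_of_cr hφ hψ h₁ h3) c₂ L₂ bs₂ h₂ ?_
    rw [← hg₁, ← hg₂, hconj]

end AmalgCR
/-- Every element of `G = A ∗_C B` is conjugate to a cyclically reduced element; moreover all
cyclically reduced elements conjugate to a given `g` have reduced forms of the same length. -/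
theorem exists_cyclicallyReduced_conjugate
    (hφ : Function.Injective φ) (hψ : Function.Injective ψ) (g : Amalg φ ψ) :
    (∃ g₀ x : Amalg φ ψ, x⁻¹ * g * x = g₀ ∧ CyclicallyReduced φ ψ g₀) ∧
    (∀ (g₁ g₂ x₁ x₂ c₁ c₂ : Amalg φ ψ) (L₁ L₂ : List (Amalg φ ψ)),
      x₁⁻¹ * g * x₁ = g₁ → x₂⁻¹ * g * x₂ = g₂ →
      CyclicallyReduced φ ψ g₁ → CyclicallyReduced φ ψ g₂ →
      ReducedForm φ ψ c₁ L₁ → g₁ = c₁ * L₁.prod →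
      ReducedForm φ ψ c₂ L₂ → g₂ = c₂ * L₂.prod →
      L₁.length = L₂.length) := by
  constructor
  · obtain ⟨c, L, bs, hrf, hg⟩ := AmalgCR.exists_rf hφ hψ g
    obtain ⟨g₀, x, hx, hcr⟩ := AmalgCR.exists_cr hφ hψ bs.length c L bs hrf le_rfl
    exact ⟨g₀, x, by rw [hg]; exact hx, hcr⟩
  · intro g₁ g₂ x₁ x₂ c₁ c₂ L₁ L₂ h1 h2 hcr₁ hcr₂ hrf₁ hg₁ hrf₂ hg₂
    obtain ⟨bs₁, hb₁⟩ := AmalgCR.ReducedForm.rf hφ hψ hrf₁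
    obtain ⟨bs₂, hb₂⟩ := AmalgCR.ReducedForm.rf hφ hψ hrf₂
    obtain ⟨c₁', L₁', hg₁', hcrf₁⟩ := hcr₁
    obtain ⟨c₂', L₂', hg₂', hcrf₂⟩ := hcr₂
    obtain ⟨bs₁', hb₁'⟩ := AmalgCR.ReducedForm.rf hφ hψ hcrf₁.1
    obtain ⟨bs₂', hb₂'⟩ := AmalgCR.ReducedForm.rf hφ hψ hcrf₂.1
    have e₁ : bs₁ = bs₁' := AmalgCR.bs_unique hφ hψ hb₁ hb₁' (by rw [← hg₁, ← hg₁'])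
    have e₂ : bs₂ = bs₂' := AmalgCR.bs_unique hφ hψ hb₂ hb₂' (by rw [← hg₂, ← hg₂'])
    have hconj : (x₁⁻¹ * x₂)⁻¹ * g₁ * (x₁⁻¹ * x₂) = g₂ := by
      rw [← h1, ← h2]; group
    have hconj' : (x₂⁻¹ * x₁)⁻¹ * g₂ * (x₂⁻¹ * x₁) = g₁ := by
      rw [← h1, ← h2]; group
    have le₁ : bs₁'.length ≤ bs₂'.length :=
      AmalgCR.cr_le hφ hψ hb₁' hg₁' hcrf₁ hb₂' hg₂' hconj
    have le₂ : bs₂'.length ≤ bs₁'.length :=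
      AmalgCR.cr_le hφ hψ hb₂' hg₂' hcrf₂ hb₁' hg₁' hconj'
    have l₁ : L₁.length = bs₁.length := hb₁.length_eq
    have l₂ : L₂.length = bs₂.length := hb₂.length_eq
    rw [l₁, l₂, e₁, e₂]
    omega
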